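/- For positive reals x_1 ≥ x_2 ≥ ... ≥ x_k > 0 with x_1 ≤ x_2 + ... + x_k, and d ≥ 2 a natural number, one has (x_1 + ... + x_k)^d ≥ 2(x_1^d + ... + x_k^d). -/

import Mathlib

theorem weight_inequality_powers (k d : ℕ) (hk : 2 ≤ k) (hd : 2 ≤ d)
    (x : Fin k → ℝ) (hpos : ∀ i, 0 < x i)
    (hmono : ∀ i j : Fin k, i ≤ j → x j ≤ x i)
    (hdom : x ⟨0, by omega⟩ ≤ ∑ i ∈ Finset.univ.erase ⟨0, by omega⟩, x i) :
    2 * ∑ i, (x i) ^ d ≤ (∑ i, x i) ^ d := by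
  set S := ∑ i, x i with hS
  have h0 : (⟨0, by omega⟩ : Fin k) ∈ Finset.univ := Finset.mem_univ _
  have hSsplit : x ⟨0, by omega⟩ + ∑ i ∈ Finset.univ.erase ⟨0, by omega⟩, x i = S :=
    Finset.add_sum_erase _ _ h0
  have hx0 : x ⟨0, by omega⟩ ≤ S / 2 := by linarith
  have hSpos : 0 < S := Finset.sum_pos (fun i _ => hpos i) ⟨⟨0, by omega⟩, h0⟩
  have hxle : ∀ i, x i ≤ S / 2 := fun i =>
    le_trans (hmono ⟨0, by omega⟩ i (Fin.le_def.mpr (Nat.zero_le _))) hx0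
  have hstep : ∀ i : Fin k, x i ^ d ≤ (S / 2) ^ (d - 1) * x i := by
    intro i
    have h1 : x i ^ d = x i ^ (d - 1) * x i := by
      rw [← pow_succ]; congr 1; omega
    rw [h1]
    apply mul_le_mul_of_nonneg_right _ (hpos i).le
    exact pow_le_pow_left₀ (hpos i).le (hxle i) _
  have hsum : ∑ i, x i ^ d ≤ (S / 2) ^ (d - 1) * S := by
    calc ∑ i, x i ^ d ≤ ∑ i, (S / 2) ^ (d - 1) * x i :=
          Finset.sum_le_sum fun i _ => hstep i
      _ = (S / 2) ^ (d - 1) * S := by rw [← Finset.mul_sum]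
  have hfin : 2 * ((S / 2) ^ (d - 1) * S) ≤ S ^ d := by
    have hhalf : (S / 2) ^ (d - 1) ≤ S ^ (d - 1) / 2 := by
      rw [div_pow]
      apply div_le_div_of_nonneg_left (pow_nonneg hSpos.le _) (by norm_num)
      calc (2 : ℝ) = 2 ^ 1 := (pow_one 2).symm
        _ ≤ 2 ^ (d - 1) := pow_le_pow_right₀ (by norm_num) (by omega)
    have hSd : S ^ (d - 1) * S = S ^ d := by
      rw [← pow_succ]; congr 1; omega
    nlinarith [pow_nonneg hSpos.le (d - 1), mul_le_mul_of_nonneg_right hhalf hSpos.le]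
  linarith
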